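/- Let G be a finite group, let n ≥ 1, and let G = G_0 ⊵ G_1 ⊵ … ⊵ G_n = {1} be a subnormal series (each G_i is a normal subgroup of G_{i−1}). Let Σ ⊆ G be such that for every 1 ≤ i ≤ n the set Σ ∩ G_{i−1} generates the group G_{i−1}. For each i let π_i : G_{i−1} → G_{i−1}/G_i be the quotient homomorphism, and suppose c_i ≥ 1 is such that every element of the quotient group G_{i−1}/G_i is computed by some straight-line sequence over π_i(Σ ∩ G_{i−1}) of length at most c_i. Then every t ∈ G is computed by a straight-line sequence over Σ of length at most c_1 + c_2 + … + c_n + n − 1. -/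
import Mathlib


/-- A straight-line sequence over `Sig` in a semigroup: every entry is either a
generator from `Sig` or a product of two earlier entries. -/
def IsSLSeq {S : Type*} [Semigroup S] (Sig : Set S) (L : List S) : Prop :=
  ∀ m : Fin L.length, L.get m ∈ Sig ∨
    ∃ i j : Fin L.length, (i : ℕ) < (m : ℕ) ∧ (j : ℕ) < (m : ℕ) ∧ L.get m = L.get i * L.get j

/-- The straight-line cost of `t` over `Sig`: the minimal length of a straight-line
sequence over `Sig` containing `t`. -/
noncomputable def slCost {S : Type*} [Semigroup S] (Sig : Set S) (t : S) : ℕ :=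
  sInf { n : ℕ | ∃ L : List S, IsSLSeq Sig L ∧ t ∈ L ∧ L.length = n }

/-- The semigroup structure underlying a group structure. -/
def semigroupOfGroup {α : Type*} (g : Group α) : Semigroup α := letI := g; inferInstance

section helpers
variable {S : Type*} [Semigroup S] {Sig : Set S}

lemma isSLSeq_iff (Sig : Set S) (L : List S) :
    IsSLSeq Sig L ↔ ∀ m (hm : m < L.length), L[m] ∈ Sig ∨
      ∃ i j, ∃ (hi : i < m) (hj : j < m),
        L[m] = L[i]'(hi.trans hm) * L[j]'(hj.trans hm) := by
  constructor
  · intro h m hm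
    rcases h ⟨m, hm⟩ with h1 | ⟨i, j, hi, hj, hij⟩
    · left; simpa using h1
    · right; exact ⟨i, j, hi, hj, by simpa using hij⟩
  · intro h m
    rcases h m m.isLt with h1 | ⟨i, j, hi, hj, hij⟩
    · left; simpa using h1
    · right; exact ⟨⟨i, hi.trans m.isLt⟩, ⟨j, hj.trans m.isLt⟩, hi, hj, by simpa using hij⟩

lemma isSLSeq_nil : IsSLSeq Sig ([] : List S) := by
  intro m; exact absurd m.isLt (by simp)

lemma IsSLSeq.append {L1 L2 : List S} (h1 : IsSLSeq Sig L1) (h2 : IsSLSeq Sig L2) :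
    IsSLSeq Sig (L1 ++ L2) := by
  rw [isSLSeq_iff] at h1 h2 ⊢
  intro m hm
  simp only [List.length_append] at hm
  by_cases h : m < L1.length
  · rcases h1 m h with h' | ⟨i, j, hi, hj, hij⟩
    · left; rw [List.getElem_append_left h]; exact h'
    · right
      exact ⟨i, j, hi, hj, by
        rw [List.getElem_append_left h, List.getElem_append_left (hi.trans h),
          List.getElem_append_left (hj.trans h)]; exact hij⟩
  · push_neg at h
    rcases h2 (m - L1.length) (by omega) with h' | ⟨i, j, hi, hj, hij⟩
    · left; rw [List.getElem_append_right h]; exact h'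
    · right
      refine ⟨L1.length + i, L1.length + j, by omega, by omega, ?_⟩
      rw [List.getElem_append_right h, List.getElem_append_right (by omega : L1.length ≤ L1.length + i),
        List.getElem_append_right (by omega : L1.length ≤ L1.length + j)]
      simpa using hij

lemma IsSLSeq.of_append_left {L1 L2 : List S} (h : IsSLSeq Sig (L1 ++ L2)) : IsSLSeq Sig L1 := by
  rw [isSLSeq_iff] at h ⊢
  intro m hm
  have hm' : m < (L1 ++ L2).length := by simp; omega
  rcases h m hm' with h' | ⟨i, j, hi, hj, hij⟩
  · left; rwa [List.getElem_append_left hm] at h'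
  · right
    refine ⟨i, j, hi, hj, ?_⟩
    rwa [List.getElem_append_left hm, List.getElem_append_left (hi.trans hm),
      List.getElem_append_left (hj.trans hm)] at hij

lemma IsSLSeq.snoc {L : List S} {a : S} (h : IsSLSeq Sig L)
    (ha : a ∈ Sig ∨ ∃ i j, ∃ (hi : i < L.length) (hj : j < L.length), a = L[i] * L[j]) :
    IsSLSeq Sig (L ++ [a]) := by
  rw [isSLSeq_iff] at h ⊢
  intro m hm
  simp only [List.length_append, List.length_singleton] at hm
  by_cases hml : m < L.length
  · rcases h m hml with h' | ⟨i, j, hi, hj, hij⟩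
    · left; rw [List.getElem_append_left hml]; exact h'
    · right
      exact ⟨i, j, hi, hj, by
        rw [List.getElem_append_left hml, List.getElem_append_left (hi.trans hml),
          List.getElem_append_left (hj.trans hml)]; exact hij⟩
  · have hm' : m = L.length := by omega
    subst hm'
    have hgeta : (L ++ [a])[L.length] = a := by
      rw [List.getElem_append_right (le_refl _)]; simp
    rcases ha with h' | ⟨i, j, hi, hj, hij⟩
    · left; rw [hgeta]; exact h'
    · right
      refine ⟨i, j, hi, hj, ?_⟩
      rw [hgeta, List.getElem_append_left hi, List.getElem_append_left hj]
      exact hij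

lemma IsSLSeq.mono {Sig' : Set S} {L : List S} (hs : Sig ⊆ Sig') (h : IsSLSeq Sig L) :
    IsSLSeq Sig' L := by
  intro m
  rcases h m with h' | h'
  · exact Or.inl (hs h')
  · exact Or.inr h'

lemma IsSLSeq.listMap {T : Type*} [Semigroup T] {L : List S} (f : S → T)
    (hf : ∀ a b, f (a * b) = f a * f b) (h : IsSLSeq Sig L) :
    IsSLSeq (f '' Sig) (L.map f) := by
  rw [isSLSeq_iff] at h ⊢
  intro m hm
  simp only [List.length_map] at hm
  rcases h m hm with h' | ⟨i, j, hi, hj, hij⟩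
  · left; rw [List.getElem_map]; exact ⟨_, h', rfl⟩
  · right
    refine ⟨i, j, hi, hj, ?_⟩
    simp only [List.getElem_map]
    rw [hij, hf]

lemma exists_sl_lift {T : Type*} [Semigroup T] (f : S → T)
    (hf : ∀ a b, f (a * b) = f a * f b) (SigM : Set S) (SigN : Set T)
    (hsub : ∀ x ∈ SigN, ∃ g ∈ SigM, f g = x) :
    ∀ Lq : List T, IsSLSeq SigN Lq → ∃ L : List S, IsSLSeq SigM L ∧ L.map f = Lq := by
  intro Lq
  induction Lq using List.reverseRecOn with
  | nil => exact fun _ => ⟨[], isSLSeq_nil, rfl⟩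
  | append_singleton Lq' a ih =>
    intro h
    obtain ⟨L', hL', hmap⟩ := ih h.of_append_left
    have hlen : L'.length = Lq'.length := by rw [← hmap]; simp
    have hlast := (isSLSeq_iff _ _).1 h Lq'.length (by simp)
    have hgeta : (Lq' ++ [a])[Lq'.length] = a := by
      rw [List.getElem_append_right (le_refl _)]; simp
    rw [hgeta] at hlast
    rcases hlast with h' | ⟨i, j, hi, hj, hij⟩
    · obtain ⟨g, hg, hfg⟩ := hsub a h'
      exact ⟨L' ++ [g], hL'.snoc (Or.inl hg), by simp [hmap, hfg]⟩
    · refine ⟨L' ++ [L'[i]'(by omega) * L'[j]'(by omega)],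
        hL'.snoc (Or.inr ⟨i, j, by omega, by omega, rfl⟩), ?_⟩
      rw [List.map_append, hmap]
      congr 1
      simp only [List.map_cons, List.map_nil]
      congr 1
      rw [hij, hf, List.getElem_append_left hi, List.getElem_append_left hj]
      have : ∀ k (hk : k < L'.length), f (L'[k]'hk) = Lq'[k]'(by omega) := by
        intro k hk
        have e : Lq'[k]'(by omega) = (L'.map f)[k]'(by simpa using hk) :=
          List.getElem_of_eq hmap.symm _
        rw [e, List.getElem_map]
      rw [this i (by omega), this j (by omega)]

end helpers

lemma sl_step (G : Type*) [Group G] (Sig : Set G) (A B : Subgroup G)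
    (hN : (B.subgroupOf A).Normal) (cB : ℕ)
    (hq : ∀ q : A ⧸ B.subgroupOf A, ∃ L : List (A ⧸ B.subgroupOf A),
      @IsSLSeq _ (semigroupOfGroup (@QuotientGroup.Quotient.group _ _ _ hN))
        { x | ∃ g : A, (g : G) ∈ Sig ∧ QuotientGroup.mk g = x } L ∧ q ∈ L ∧ L.length ≤ cB)
    (t : G) (ht : t ∈ A) :
    ∃ (L1 : List G) (g : G) (m : ℕ) (hm : m < L1.length),
      IsSLSeq Sig L1 ∧ L1[m] = g ∧ L1.length ≤ cB ∧ g⁻¹ * t ∈ B := by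
  haveI := hN
  obtain ⟨Lq, hLq, hqmem, hqlen⟩ := hq (QuotientGroup.mk ⟨t, ht⟩)
  obtain ⟨L, hL, hmap⟩ := exists_sl_lift (S := A) (T := A ⧸ B.subgroupOf A)
    (QuotientGroup.mk) (fun a b => rfl) {g : A | (g : G) ∈ Sig}
    { x | ∃ g : A, (g : G) ∈ Sig ∧ QuotientGroup.mk g = x }
    (by rintro x ⟨g, hg, hx⟩; exact ⟨g, hg, hx⟩) Lq hLq
  obtain ⟨m, hm, hLqm⟩ := List.getElem_of_mem hqmem
  have hmL : m < L.length := by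
    have : L.length = Lq.length := by rw [← hmap]; simp
    omega
  have hmk : (QuotientGroup.mk (L[m]'hmL) : A ⧸ B.subgroupOf A) = QuotientGroup.mk ⟨t, ht⟩ := by
    have e : Lq[m]'hm = (L.map QuotientGroup.mk)[m]'(by simpa using hmL) :=
      List.getElem_of_eq hmap.symm _
    rw [e, List.getElem_map] at hLqm
    exact hLqm
  have hrel : (L[m]'hmL)⁻¹ * (⟨t, ht⟩ : A) ∈ B.subgroupOf A := (QuotientGroup.eq).1 hmk
  refine ⟨L.map (fun x : A => (x : G)), ((L[m]'hmL) : G), m, by simpa using hmL, ?_, ?_, ?_, ?_⟩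
  · exact ((hL.listMap (fun x : A => (x : G)) (fun a b => rfl)).mono
      (by rintro x ⟨g, hg, rfl⟩; exact hg))
  · rw [List.getElem_map]
  · have : L.length = Lq.length := by rw [← hmap]; simp
    simpa using this ▸ hqlen
  · simpa [Subgroup.mem_subgroupOf] using hrel

lemma sl_aux (G : Type*) [Group G] (Sig : Set G) :
    ∀ n : ℕ, 1 ≤ n → ∀ H : ℕ → Subgroup G,
    (∀ i, ((H (i+1)).subgroupOf (H i)).Normal) →
    H n = ⊥ →
    ∀ c : ℕ → ℕ,
    (∀ i, i < n → ∀ (hN : ((H (i+1)).subgroupOf (H i)).Normal),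
      ∀ q : (H i) ⧸ (H (i+1)).subgroupOf (H i),
        ∃ L : List ((H i) ⧸ (H (i+1)).subgroupOf (H i)),
          @IsSLSeq _ (semigroupOfGroup (@QuotientGroup.Quotient.group _ _ _ hN))
            { x | ∃ g : (H i), (g : G) ∈ Sig ∧ QuotientGroup.mk g = x } L ∧
          q ∈ L ∧ L.length ≤ c i) →
    ∀ t : G, t ∈ H 0 →
    ∃ L : List G, IsSLSeq Sig L ∧ t ∈ L ∧
      L.length ≤ (∑ i ∈ Finset.range n, c i) + n - 1 := by
  intro n hn
  induction n, hn using Nat.le_induction with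
  | base =>
    intro H hnorm hbot c hquot t ht
    obtain ⟨L1, g, m, hm, hSL, hget, hlen, hrel⟩ :=
      sl_step G Sig (H 0) (H 1) (hnorm 0) (c 0) (hquot 0 (by omega) (hnorm 0)) t ht
    rw [hbot, Subgroup.mem_bot] at hrel
    have hgt : g = t := inv_mul_eq_one.mp hrel
    refine ⟨L1, hSL, ?_, by simpa using hlen⟩
    have := List.getElem_mem hm
    rwa [hget, hgt] at this
  | succ n hn ih =>
    intro H hnorm hbot c hquot t ht
    obtain ⟨L1, g, m, hm, hSL1, hget1, hlen1, hrel⟩ :=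
      sl_step G Sig (H 0) (H 1) (hnorm 0) (c 0) (hquot 0 (by omega) (hnorm 0)) t ht
    set h : G := g⁻¹ * t with hh
    obtain ⟨L2, hSL2, hmem2, hlen2⟩ := ih (fun i => H (i + 1)) (fun i => hnorm (i + 1))
      hbot (fun i => c (i + 1)) (fun i hi => hquot (i + 1) (by omega)) h hrel
    obtain ⟨k, hk, hget2⟩ := List.getElem_of_mem hmem2
    have hgm : (L1 ++ L2)[m]'(by simp; omega) = g := by
      rw [List.getElem_append_left hm]; exact hget1
    have hhk : (L1 ++ L2)[L1.length + k]'(by simp; omega) = h := by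
      rw [List.getElem_append_right (by omega)]
      simpa using hget2
    refine ⟨(L1 ++ L2) ++ [g * h], (hSL1.append hSL2).snoc
      (Or.inr ⟨m, L1.length + k, by simp; omega, by simp; omega, by rw [hgm, hhk]⟩), ?_, ?_⟩
    · have hgh : g * h = t := by rw [hh]; group
      rw [hgh]
      simp
    · have hsum : ∑ i ∈ Finset.range (n + 1), c i
        = (∑ i ∈ Finset.range n, c (i + 1)) + c 0 := Finset.sum_range_succ' c n
      simp only [List.length_append, List.length_singleton]
      omega


/-- straight-line cost along a subnormal series with an adapted generating
set is dominated by the sum of the costs in the consecutive quotients. -/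
theorem adapted_generating_set_subnormal_series_cost
    (G : Type*) [Group G] [Fintype G] (n : ℕ) (hn : 1 ≤ n)
    (H : Fin (n + 1) → Subgroup G) (hTop : H 0 = ⊤) (hBot : H (Fin.last n) = ⊥)
    (hle : ∀ i : Fin n, H i.succ ≤ H i.castSucc)
    (hnorm : ∀ i : Fin n, ((H i.succ).subgroupOf (H i.castSucc)).Normal)
    (Sig : Set G)
    (hgen : ∀ i : Fin n, Subgroup.closure (Sig ∩ (H i.castSucc : Set G)) = H i.castSucc)
    (c : Fin n → ℕ) (hc : ∀ i, 1 ≤ c i)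
    (hquot : ∀ i : Fin n,
      ∀ q : (H i.castSucc) ⧸ (H i.succ).subgroupOf (H i.castSucc),
        ∃ L : List ((H i.castSucc) ⧸ (H i.succ).subgroupOf (H i.castSucc)),
          @IsSLSeq _ (semigroupOfGroup (@QuotientGroup.Quotient.group _ _ _ (hnorm i)))
            { x | ∃ g : (H i.castSucc), (g : G) ∈ Sig ∧ QuotientGroup.mk g = x } L ∧
          q ∈ L ∧ L.length ≤ c i)
    (t : G) :
    ∃ L : List G, IsSLSeq Sig L ∧ t ∈ L ∧ L.length ≤ (∑ i, c i) + n - 1 := by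
  classical
  set H' : ℕ → Subgroup G := fun i => if h : i < n + 1 then H ⟨i, h⟩ else ⊥ with hH'
  set c' : ℕ → ℕ := fun i => if h : i < n then c ⟨i, h⟩ else 0 with hc'
  have hnorm' : ∀ i, ((H' (i + 1)).subgroupOf (H' i)).Normal := by
    intro i
    by_cases hi : i < n
    · have e1 : H' i = H (⟨i, hi⟩ : Fin n).castSucc := by
        rw [hH']; simp only [dif_pos (by omega : i < n + 1)]
        congr 1
      have e2 : H' (i + 1) = H (⟨i, hi⟩ : Fin n).succ := by
        rw [hH']; simp only [dif_pos (by omega : i + 1 < n + 1)]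
        congr 1
      rw [e1, e2]
      exact hnorm ⟨i, hi⟩
    · have e2 : H' (i + 1) = ⊥ := by rw [hH']; simp only [dif_neg (by omega : ¬ i + 1 < n + 1)]
      rw [e2, Subgroup.bot_subgroupOf]
      infer_instance
  have hbot' : H' n = ⊥ := by
    rw [hH']; simp only [dif_pos (by omega : n < n + 1)]
    rw [← hBot]
    congr 1
  have hquot' : ∀ i, i < n → ∀ (hN : ((H' (i + 1)).subgroupOf (H' i)).Normal),
      ∀ q : (H' i) ⧸ (H' (i + 1)).subgroupOf (H' i),
        ∃ L : List ((H' i) ⧸ (H' (i + 1)).subgroupOf (H' i)),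
          @IsSLSeq _ (semigroupOfGroup (@QuotientGroup.Quotient.group _ _ _ hN))
            { x | ∃ g : (H' i), (g : G) ∈ Sig ∧ QuotientGroup.mk g = x } L ∧
          q ∈ L ∧ L.length ≤ c' i := by
    intro i hi
    have e1 : H' i = H (⟨i, hi⟩ : Fin n).castSucc := by
      rw [hH']; simp only [dif_pos (by omega : i < n + 1)]
      congr 1
    have e2 : H' (i + 1) = H (⟨i, hi⟩ : Fin n).succ := by
      rw [hH']; simp only [dif_pos (by omega : i + 1 < n + 1)]
      congr 1
    have ec : c' i = c ⟨i, hi⟩ := by rw [hc']; simp only [dif_pos hi]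
    rw [e1, e2, ec]
    exact fun hN => hquot ⟨i, hi⟩
  have ht : t ∈ H' 0 := by
    have e0 : H' 0 = H 0 := by
      rw [hH']; simp only [dif_pos (by omega : 0 < n + 1)]
      congr 1
    rw [e0, hTop]
    trivial
  obtain ⟨L, hSL, hmem, hlen⟩ := sl_aux G Sig n hn H' hnorm' hbot' c' hquot' t ht
  refine ⟨L, hSL, hmem, ?_⟩
  have hsum : ∑ i ∈ Finset.range n, c' i = ∑ i, c i := by
    rw [← Fin.sum_univ_eq_sum_range (fun i => c' i) n]
    apply Finset.sum_congr rfl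
    intro i _
    rw [hc']
    simp [i.isLt]
  omega
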